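/- For every integer n ≥ 2, the number of cyclic permutations of length n avoiding all three cyclic patterns [1234], [1324], and [1423] equals n−1; that is, #Av_n([1234],[1324],[1423]) = n−1. -/

import Mathlib

/-- A sequence `σ` of length `n` (with distinct values) contains the pattern `π`
of length `k` if some subsequence of `σ` is order isomorphic to `π`. -/
def ContainsPat {n k : ℕ} (σ : Fin n → Fin n) (π : Fin k → ℕ) : Prop :=
  ∃ f : Fin k → Fin n, StrictMono f ∧ ∀ i j : Fin k, π i < π j ↔ σ (f i) < σ (f j)

/-- The rotation of the sequence `σ` starting at position `r`. -/
def rotSeq {n : ℕ} (σ : Fin n → Fin n) (r : Fin n) : Fin n → Fin n :=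
  fun i => σ (i + r)

/-- The cyclic permutation `[σ]` contains the cyclic pattern `[π]` if some
rotation of `σ` contains `π` linearly. -/
def CycContains {n k : ℕ} (σ : Fin n → Fin n) (π : Fin k → ℕ) : Prop :=
  ∃ r : Fin n, ContainsPat (rotSeq σ r) π

/-- The cyclic permutation `[σ]` avoids the cyclic pattern `[π]`. -/
def CycAvoids {n k : ℕ} (σ : Fin n → Fin n) (π : Fin k → ℕ) : Prop :=
  ¬ CycContains σ π

/-- The cyclic permutation `[σ]`, i.e. the set of all rotations of `σ`. -/
def CycClass {n : ℕ} (σ : Fin n → Fin n) : Set (Fin n → Fin n) :=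
  Set.range (rotSeq σ)

/-- The set of cyclic permutations (rotation classes) of length `n` all of whose
representatives are permutations and which satisfy the (rotation-invariant)
predicate `P`. -/
def AvClasses (n : ℕ) (P : (Fin n → Fin n) → Prop) : Set (Set (Fin n → Fin n)) :=
  { C | ∃ σ : Equiv.Perm (Fin n), C = CycClass ⇑σ ∧ P ⇑σ }

/-- The cyclic descent number: the number of indices `i` (mod `n`) with
`σ i > σ (i+1)`. -/
def cdes {n : ℕ} (σ : Fin n → Fin n) : ℕ :=
  (Finset.univ.filter fun i : Fin n =>
    σ ⟨(↑i + 1) % n, Nat.mod_lt _ i.pos⟩ < σ i).card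

/-- The cyclic peak number: the number of indices `i` (mod `n`) with
`σ (i-1) < σ i > σ (i+1)`. -/
def cpk {n : ℕ} (σ : Fin n → Fin n) : ℕ :=
  (Finset.univ.filter fun i : Fin n =>
    σ ⟨(↑i + (n - 1)) % n, Nat.mod_lt _ i.pos⟩ < σ i ∧
    σ ⟨(↑i + 1) % n, Nat.mod_lt _ i.pos⟩ < σ i).card

/-! ### Auxiliary development -/

/-- The anchored avoider: value `0` at position `0`, value `k` at position `1`,
then all remaining values in decreasing order. -/
def anch {n : ℕ} (k : Fin n) (i : Fin n) : Fin n :=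
  if h0 : i.val = 0 then ⟨0, Nat.lt_of_le_of_lt (Nat.zero_le _) i.isLt⟩
  else if h1 : i.val = 1 then k
  else if h2 : k.val < n + 1 - i.val then ⟨n + 1 - i.val, by have := i.isLt; omega⟩
  else ⟨n - i.val, by have := i.isLt; omega⟩

lemma anch_val {n : ℕ} (k i : Fin n) :
    (anch k i).val =
      if i.val = 0 then 0 else if i.val = 1 then k.val
      else if k.val < n + 1 - i.val then n + 1 - i.val else n - i.val := by
  unfold anch
  split_ifs <;> rfl

lemma anch_inj {n : ℕ} (k : Fin n) (hk : k.val ≠ 0) : Function.Injective (anch k) := by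
  intro i j h
  have hv := congrArg Fin.val h
  rw [anch_val, anch_val] at hv
  have hi := i.isLt; have hj := j.isLt; have hkn := k.isLt
  apply Fin.ext
  split_ifs at hv <;> omega

lemma anch_dec {n : ℕ} (k : Fin n) {i j : Fin n} (h2 : 2 ≤ i.val) (hij : i.val < j.val) :
    (anch k j).val < (anch k i).val := by
  rw [anch_val, anch_val]
  have hi := i.isLt; have hj := j.isLt; have hkn := k.isLt
  split_ifs <;> omega

lemma anch_zero {n : ℕ} (k : Fin n) (hk : k.val ≠ 0) (i : Fin n) :
    (anch k i).val = 0 ↔ i.val = 0 := by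
  rw [anch_val]
  have hi := i.isLt; have hkn := k.isLt
  split_ifs <;> omega

lemma anch_one {n : ℕ} (k : Fin n) {i : Fin n} (hi : i.val = 1) : anch k i = k := by
  apply Fin.ext
  rw [anch_val]
  have := k.isLt
  split_ifs <;> omega

lemma anch_ne_k {n : ℕ} (k : Fin n) {i : Fin n} (hi : 2 ≤ i.val) :
    (anch k i).val ≠ k.val := by
  rw [anch_val]
  have := i.isLt; have := k.isLt
  split_ifs <;> omega

/-- The cyclic ordering of four positions obtained by rotating a strictly
increasing quadruple. -/
lemma ordering4 {n : ℕ} (f : Fin 4 → Fin n) (hf : StrictMono f) (r : Fin n)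
    (p : Fin 4 → Fin n) (hp : ∀ i, p i = f i + r) :
    ((p 0).val < (p 1).val ∧ (p 1).val < (p 2).val ∧ (p 2).val < (p 3).val) ∨
    ((p 1).val < (p 2).val ∧ (p 2).val < (p 3).val ∧ (p 3).val < (p 0).val) ∨
    ((p 2).val < (p 3).val ∧ (p 3).val < (p 0).val ∧ (p 0).val < (p 1).val) ∨
    ((p 3).val < (p 0).val ∧ (p 0).val < (p 1).val ∧ (p 1).val < (p 2).val) := by
  have key : ∀ i, (p i).val = ((f i).val + r.val) % n := by
    intro i; rw [hp i]; simp [Fin.add_def]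
  have hn : 0 < n := Nat.lt_of_le_of_lt (Nat.zero_le _) r.isLt
  have hmod : ∀ i : Fin 4, ((f i).val + r.val < n ∧ (p i).val = (f i).val + r.val) ∨
      (n ≤ (f i).val + r.val ∧ (p i).val = (f i).val + r.val - n) := by
    intro i
    rcases Nat.lt_or_ge ((f i).val + r.val) n with h | h
    · exact Or.inl ⟨h, by rw [key i, Nat.mod_eq_of_lt h]⟩
    · refine Or.inr ⟨h, ?_⟩
      rw [key i, Nat.mod_eq_sub_mod h,
        Nat.mod_eq_of_lt (by have := (f i).isLt; have := r.isLt; omega)]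
  have h01 : (f 0).val < (f 1).val := hf (by decide)
  have h12 : (f 1).val < (f 2).val := hf (by decide)
  have h23 : (f 2).val < (f 3).val := hf (by decide)
  have h3 := (f 3).isLt
  have := hmod 0; have := hmod 1; have := hmod 2; have := hmod 3
  omega

/-- Core avoidance property of `anch k`. -/
lemma anch_key {n : ℕ} (k : Fin n) (hk : k.val ≠ 0) :
    ¬ ∃ (r : Fin n) (f : Fin 4 → Fin n), StrictMono f ∧
      anch k (f 0 + r) < anch k (f 1 + r) ∧ anch k (f 2 + r) < anch k (f 3 + r) := by
  rintro ⟨r, f, hf, hv01, hv23⟩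
  set p : Fin 4 → Fin n := fun i => f i + r with hpdef
  have hv01' : (anch k (p 0)).val < (anch k (p 1)).val := hv01
  have hv23' : (anch k (p 2)).val < (anch k (p 3)).val := hv23
  rcases ordering4 f hf r p (fun i => rfl) with ⟨a,b,c⟩ | ⟨a,b,c⟩ | ⟨a,b,c⟩ | ⟨a,b,c⟩
  · exact absurd hv23' (by have := anch_dec k (i := p 2) (j := p 3) (by omega) c; omega)
  · rcases Nat.lt_or_ge (p 2).val 2 with h | h
    · have h1 : (p 1).val = 0 := by omega
      have := (anch_zero k hk (p 1)).mpr h1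
      omega
    · exact absurd hv23' (by have := anch_dec k (i := p 2) (j := p 3) h b; omega)
  · exact absurd hv01' (by have := anch_dec k (i := p 0) (j := p 1) (by omega) c; omega)
  · rcases Nat.lt_or_ge (p 0).val 2 with h | h
    · have h3 : (p 3).val = 0 := by omega
      have := (anch_zero k hk (p 3)).mpr h3
      omega
    · exact absurd hv01' (by have := anch_dec k (i := p 0) (j := p 1) h b; omega)

lemma anch_avoids {n : ℕ} (k : Fin n) (hk : k.val ≠ 0) (π : Fin 4 → ℕ)
    (h01 : π 0 < π 1) (h23 : π 2 < π 3) : CycAvoids (anch k) π := by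
  rintro ⟨r, f, hf, hiff⟩
  exact anch_key k hk ⟨r, f, hf, (hiff 0 1).mp h01, (hiff 2 3).mp h23⟩

lemma fin4_cases {P : Fin 4 → Prop} (h0 : P 0) (h1 : P 1) (h2 : P 2) (h3 : P 3) :
    ∀ i, P i := by
  intro i
  match i with
  | 0 => exact h0
  | 1 => exact h1
  | 2 => exact h2
  | 3 => exact h3

lemma quad_mono {n : ℕ} {z o c d : Fin n} (h1 : z.val < o.val) (h2 : o.val < c.val)
    (h3 : c.val < d.val) : StrictMono ![z, o, c, d] := by
  have key : ∀ i j : Fin 4, i < j → (![z,o,c,d] i).val < (![z,o,c,d] j).val := by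
    refine fin4_cases ?_ ?_ ?_ ?_ <;> refine fin4_cases ?_ ?_ ?_ ?_ <;> intro hij <;>
      first
        | exact absurd hij (by decide)
        | (simp only [Matrix.cons_val_zero, Matrix.cons_val_one, Matrix.head_cons,
            Matrix.cons_val_two, Matrix.tail_cons, Matrix.cons_val_three]; omega)
  exact fun i j hij => key i j hij

/-- Any injective cyclic sequence with `0` first avoiding the three patterns is
strictly decreasing from position `2` on. -/
lemma dec_of_avoids {n : ℕ} (τ : Fin n → Fin n)
    (hinj : Function.Injective τ) (z o : Fin n) (hzv : z.val = 0) (hov : o.val = 1)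
    (h0 : (τ z).val = 0)
    (hA : ¬ ContainsPat τ ![1,2,3,4]) (hB : ¬ ContainsPat τ ![1,3,2,4])
    (hC : ¬ ContainsPat τ ![1,4,2,3]) :
    ∀ c d : Fin n, 2 ≤ c.val → c.val < d.val → (τ d).val < (τ c).val := by
  intro c d hc hcd
  by_contra hcon
  have hne : τ c ≠ τ d := fun h => by
    have := congrArg Fin.val (hinj h); omega
  have hcd' : (τ c).val < (τ d).val := by
    rcases Nat.lt_trichotomy (τ c).val (τ d).val with h | h | h
    · exact h
    · exact absurd (Fin.ext h) hne
    · omega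
  have hpos : ∀ x : Fin n, x.val ≠ 0 → 0 < (τ x).val := by
    intro x hx
    rcases Nat.eq_zero_or_pos (τ x).val with h | h
    · have := congrArg Fin.val (hinj (Fin.ext (h.trans h0.symm))); omega
    · exact h
  have h0o : 0 < (τ o).val := hpos o (by omega)
  have h0c : 0 < (τ c).val := hpos c (by omega)
  have h0d : 0 < (τ d).val := hpos d (by omega)
  have hoc : (τ o).val ≠ (τ c).val := fun h => by
    have := congrArg Fin.val (hinj (Fin.ext h)); omega
  have hod : (τ o).val ≠ (τ d).val := fun h => by
    have := congrArg Fin.val (hinj (Fin.ext h)); omega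
  have hfmono : StrictMono ![z, o, c, d] := quad_mono (by omega) (by omega) (by omega)
  rcases Nat.lt_or_ge (τ o).val (τ c).val with hk1 | hk1
  · refine hA ⟨![z, o, c, d], hfmono, ?_⟩
    clear hA hB hC hne hpos hcon
    refine fin4_cases ?_ ?_ ?_ ?_ <;> refine fin4_cases ?_ ?_ ?_ ?_ <;>
      simp only [Matrix.cons_val_zero, Matrix.cons_val_one, Matrix.head_cons,
        Matrix.cons_val_two, Matrix.tail_cons, Matrix.cons_val_three, Fin.lt_def] <;>
      omega
  · rcases Nat.lt_or_ge (τ o).val (τ d).val with hk2 | hk2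
    · refine hB ⟨![z, o, c, d], hfmono, ?_⟩
      clear hA hB hC hne hpos hcon
      refine fin4_cases ?_ ?_ ?_ ?_ <;> refine fin4_cases ?_ ?_ ?_ ?_ <;>
        simp only [Matrix.cons_val_zero, Matrix.cons_val_one, Matrix.head_cons,
          Matrix.cons_val_two, Matrix.tail_cons, Matrix.cons_val_three, Fin.lt_def] <;>
        omega
    · refine hC ⟨![z, o, c, d], hfmono, ?_⟩
      clear hA hB hC hne hpos hcon
      refine fin4_cases ?_ ?_ ?_ ?_ <;> refine fin4_cases ?_ ?_ ?_ ?_ <;>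
        simp only [Matrix.cons_val_zero, Matrix.cons_val_one, Matrix.head_cons,
          Matrix.cons_val_two, Matrix.tail_cons, Matrix.cons_val_three, Fin.lt_def] <;>
        omega

/-- Uniqueness: an injective anchored decreasing-from-2 sequence equals `anch`. -/
lemma eq_anch {n : ℕ} (hn : 2 ≤ n) (τ : Fin n → Fin n) (hinj : Function.Injective τ)
    (z o : Fin n) (hzv : z.val = 0) (hov : o.val = 1) (h0 : (τ z).val = 0)
    (hdec : ∀ c d : Fin n, 2 ≤ c.val → c.val < d.val → (τ d).val < (τ c).val) :
    τ = anch (τ o) := by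
  set k : Fin n := τ o with hkdef
  have hk : k.val ≠ 0 := fun h => by
    have heq : τ o = τ z := Fin.ext (by omega)
    have := congrArg Fin.val (hinj heq); omega
  have hkn := k.isLt
  -- the finset of remaining values
  set s : Finset (Fin n) := (Finset.univ.erase (τ z)).erase k with hsdef
  have hmem : ∀ x : Fin n, x ∈ s ↔ x ≠ k ∧ x ≠ τ z := by
    intro x
    simp [hsdef, Finset.mem_erase]
  have hkz : k ≠ τ z := fun h => by
    have := congrArg Fin.val h; omega
  have hcard : s.card = n - 2 := by
    rw [hsdef, Finset.card_erase_of_mem, Finset.card_erase_of_mem (Finset.mem_univ _)]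
    · simp; omega
    · exact Finset.mem_erase.mpr ⟨hkz, Finset.mem_univ _⟩
  -- the increasing enumerations of the tail values
  set F : Fin (n-2) → Fin n :=
    fun j => τ ⟨n - 1 - j.val, by have := j.isLt; omega⟩ with hFdef
  set G : Fin (n-2) → Fin n :=
    fun j => anch k ⟨n - 1 - j.val, by have := j.isLt; omega⟩ with hGdef
  have hFmono : StrictMono F := by
    intro a b hab
    have ha := a.isLt; have hb := b.isLt
    have hab' : a.val < b.val := hab
    have := hdec ⟨n - 1 - b.val, by omega⟩ ⟨n - 1 - a.val, by omega⟩ (by simp; omega)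
      (by simp; omega)
    exact this
  have hGmono : StrictMono G := by
    intro a b hab
    have ha := a.isLt; have hb := b.isLt
    have hab' : a.val < b.val := hab
    exact anch_dec k (i := ⟨n - 1 - b.val, by omega⟩) (j := ⟨n - 1 - a.val, by omega⟩)
      (by simp; omega) (by simp; omega)
  have hFmem : ∀ x, F x ∈ s := by
    intro x
    have hx := x.isLt
    rw [hmem]
    constructor
    · intro h
      have := congrArg Fin.val (hinj h)
      simp at this; omega
    · intro h
      have := congrArg Fin.val (hinj h)
      simp at this; omega
  have hGmem : ∀ x, G x ∈ s := by
    intro x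
    have hx := x.isLt
    rw [hmem]
    constructor
    · intro h
      have h2 := anch_ne_k k (i := ⟨n - 1 - x.val, by omega⟩) (by simp; omega)
      exact h2 (congrArg Fin.val h)
    · intro h
      have h2 := (anch_zero k hk ⟨n - 1 - x.val, by omega⟩).mp (by rw [congrArg Fin.val h]; omega)
      simp at h2; omega
  have hFG : F = G :=
    (Finset.orderEmbOfFin_unique hcard hFmem hFmono).trans
      (Finset.orderEmbOfFin_unique hcard hGmem hGmono).symm
  funext i
  have hi := i.isLt
  rcases Nat.lt_or_ge i.val 2 with h2 | h2
  · rcases Nat.lt_or_ge i.val 1 with h1 | h1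
    · -- i = z
      have : i = z := Fin.ext (by omega)
      subst this
      apply Fin.ext
      rw [anch_val]
      simp [hzv]; omega
    · -- i = o
      have : i = o := Fin.ext (by omega)
      subst this
      exact (anch_one k hov).symm
  · have hj : n - 1 - i.val < n - 2 := by omega
    have h := congrFun hFG ⟨n - 1 - i.val, hj⟩
    have hpos : (⟨n - 1 - (n - 1 - i.val), by omega⟩ : Fin n) = i := Fin.ext (by simp; omega)
    rw [hFdef, hGdef] at h
    simpa [hpos] using h

lemma rot_rot {n : ℕ} [NeZero n] (σ : Fin n → Fin n) (r s : Fin n) :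
    rotSeq (rotSeq σ r) s = rotSeq σ (s + r) := by
  funext i
  show σ (i + s + r) = σ (i + (s + r))
  rw [add_assoc]

lemma cycClass_rot {n : ℕ} [NeZero n] (σ : Fin n → Fin n) (r : Fin n) :
    CycClass (rotSeq σ r) = CycClass σ := by
  ext x
  constructor
  · rintro ⟨s, rfl⟩
    exact ⟨s + r, (rot_rot σ r s).symm⟩
  · rintro ⟨t, rfl⟩
    refine ⟨t - r, ?_⟩
    rw [rot_rot, sub_add_cancel]

lemma mem_cycClass_self {n : ℕ} [NeZero n] (σ : Fin n → Fin n) : σ ∈ CycClass σ := by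
  refine ⟨0, ?_⟩
  funext i
  show σ (i + 0) = σ i
  rw [add_zero]

theorem card_av_1234_1324_1423 (n : ℕ) (hn : 2 ≤ n) :
    (AvClasses n fun σ => CycAvoids σ ![1,2,3,4] ∧ CycAvoids σ ![1,3,2,4] ∧ CycAvoids σ ![1,4,2,3]).ncard = n - 1 := by
  haveI : NeZero n := ⟨by omega⟩
  set z : Fin n := ⟨0, by omega⟩ with hzdef
  set o : Fin n := ⟨1, by omega⟩ with hodef
  have hzv : z.val = 0 := rfl
  have hov : o.val = 1 := rfl
  set S : Set (Fin n) := {k : Fin n | k.val ≠ 0} with hSdef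
  have himg : (AvClasses n fun σ => CycAvoids σ ![1,2,3,4] ∧ CycAvoids σ ![1,3,2,4] ∧
      CycAvoids σ ![1,4,2,3]) = (fun k : Fin n => CycClass (anch k)) '' S := by
    ext C
    constructor
    · rintro ⟨σ, rfl, hA, hB, hC⟩
      set r : Fin n := σ.symm z with hrdef
      set τ : Fin n → Fin n := rotSeq (⇑σ) r with hτdef
      have hτinj : Function.Injective τ := by
        intro a b h
        have h2 : σ (a + r) = σ (b + r) := h
        exact add_right_cancel (σ.injective h2)
      have hzr : z + r = r := by
        apply Fin.ext
        rw [Fin.add_def]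
        simp [hzv, Nat.mod_eq_of_lt r.isLt]
      have hτz : (τ z).val = 0 := by
        show (σ (z + r)).val = 0
        rw [hzr, hrdef]
        simp [hzv]
      have hA' : ¬ ContainsPat τ ![1,2,3,4] := fun h => hA ⟨r, h⟩
      have hB' : ¬ ContainsPat τ ![1,3,2,4] := fun h => hB ⟨r, h⟩
      have hC' : ¬ ContainsPat τ ![1,4,2,3] := fun h => hC ⟨r, h⟩
      have hdec := dec_of_avoids τ hτinj z o hzv hov hτz hA' hB' hC'
      have hτeq : τ = anch (τ o) := eq_anch hn τ hτinj z o hzv hov hτz hdec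
      have hk : (τ o).val ≠ 0 := by
        intro h
        have heq : τ o = τ z := Fin.ext (by omega)
        have := congrArg Fin.val (hτinj heq)
        rw [hov, hzv] at this
        omega
      refine ⟨τ o, hk, ?_⟩
      show CycClass (anch (τ o)) = CycClass ⇑σ
      rw [← hτeq, hτdef, cycClass_rot]
    · rintro ⟨k, hk, rfl⟩
      have hbij : Function.Bijective (anch k) :=
        (Finite.injective_iff_bijective).mp (anch_inj k hk)
      exact ⟨Equiv.ofBijective _ hbij, rfl,
        anch_avoids k hk _ (by norm_num) (by decide),
        anch_avoids k hk _ (by norm_num) (by decide),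
        anch_avoids k hk _ (by norm_num) (by decide)⟩
  have hinjOn : S.InjOn (fun k : Fin n => CycClass (anch k)) := by
    intro k1 h1 k2 h2 heq
    have h1' : k1.val ≠ 0 := h1
    have h2' : k2.val ≠ 0 := h2
    have heq' : CycClass (anch k1) = CycClass (anch k2) := heq
    have hmem : anch k2 ∈ CycClass (anch k1) := by
      rw [heq']
      exact mem_cycClass_self _
    obtain ⟨r, hr⟩ := hmem
    have hz2 : (anch k2 z).val = 0 := (anch_zero k2 h2' z).mpr hzv
    have hz1 : (anch k1 (z + r)).val = 0 := by
      have := congrFun hr z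
      show (anch k1 (z + r)).val = 0
      rw [show anch k1 (z + r) = anch k2 z from this]
      exact hz2
    have hzr : (z + r).val = 0 := (anch_zero k1 h1' _).mp hz1
    have hrv : r.val = 0 := by
      have hadd : (z + r).val = (z.val + r.val) % n := by rw [Fin.add_def]
      rw [hadd, hzv, Nat.zero_add, Nat.mod_eq_of_lt r.isLt] at hzr
      exact hzr
    have hor : o + r = o := by
      have hadd : (o + r).val = (o.val + r.val) % n := by rw [Fin.add_def]
      apply Fin.ext
      rw [hadd, hov, hrv, Nat.add_zero]
      exact Nat.mod_eq_of_lt (by omega)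
    have h3 := congrFun hr o
    have h4 : anch k1 (o + r) = anch k2 o := h3
    rw [hor, anch_one k1 hov, anch_one k2 hov] at h4
    exact h4
  rw [himg, Set.ncard_image_of_injOn hinjOn]
  have hS : S = ↑(Finset.univ.erase z) := by
    ext x
    rw [hSdef, Finset.coe_erase, Set.mem_setOf_eq, Set.mem_diff, Finset.coe_univ,
      Set.mem_singleton_iff, Fin.ext_iff, hzv]
    simp
  rw [hS, Set.ncard_coe_finset, Finset.card_erase_of_mem (Finset.mem_univ _)]
  simp
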